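/- Let N : ℕ and let 𝔄 be a unital subalgebra of Matrix (Fin N) (Fin N) ℂ that is closed under conjugate transpose (M ∈ 𝔄 implies Mᴴ ∈ 𝔄). Then 𝔄 is semisimple; equivalently, the Jacobson radical of 𝔄 is zero: if M ∈ 𝔄 lies in the Jacobson radical of 𝔄 then M = 0. -/

import Mathlib

open Matrix

/-- A star-closed unital subalgebra of the `N × N` complex matrices is semisimple:
its Jacobson radical is zero. -/
theorem star_closed_subalgebra_jacobson_eq_bot (N : ℕ)
    (𝔄 : Subalgebra ℂ (Matrix (Fin N) (Fin N) ℂ))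
    (hstar : ∀ M ∈ 𝔄, Mᴴ ∈ 𝔄) :
    ∀ x : 𝔄, x ∈ (⊥ : Ideal 𝔄).jacobson → x = 0 := by
  intro x hx
  set X : Matrix (Fin N) (Fin N) ℂ := (x : Matrix (Fin N) (Fin N) ℂ) with hX
  have hXs : Xᴴ ∈ 𝔄 := hstar X x.2
  have hmem : (⟨Xᴴ, hXs⟩ : 𝔄) * x ∈ (⊥ : Ideal 𝔄).jacobson :=
    Ideal.mul_mem_left _ _ hx
  rw [Ideal.mem_jacobson_iff] at hmem
  set A : Matrix (Fin N) (Fin N) ℂ := Xᴴ * X with hA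
  have hherm : A.IsHermitian := isHermitian_conjTranspose_mul_self X
  -- every eigenvalue of A is zero
  have hev : ∀ i, hherm.eigenvalues i = 0 := by
    intro i
    by_contra hne
    set lam : ℝ := hherm.eigenvalues i with hlam
    have hspec : lam ∈ spectrum ℝ A := hherm.eigenvalues_mem_spectrum_real i
    rw [spectrum.mem_iff] at hspec
    apply hspec
    have hc : (lam : ℂ) ≠ 0 := by exact_mod_cast hne
    obtain ⟨z, hz⟩ := hmem (((-(lam : ℂ)⁻¹)) • 1)
    rw [Ideal.mem_bot, sub_eq_zero] at hz
    -- transport the identity to matrices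
    have hz' : (z : Matrix (Fin N) (Fin N) ℂ) * ((-(lam : ℂ)⁻¹) • A + 1) = 1 := by
      have h2 := Subtype.ext_iff.mp hz
      simp only [Subalgebra.coe_mul, Subalgebra.coe_add, Subalgebra.coe_one,
        SetLike.val_smul, Subalgebra.coe_smul] at h2
      rw [mul_add, mul_one]
      calc (z : Matrix (Fin N) (Fin N) ℂ) * ((-(lam : ℂ)⁻¹) • A)
            + (z : Matrix (Fin N) (Fin N) ℂ)
          = (z : Matrix (Fin N) (Fin N) ℂ) *
            ((-(lam : ℂ)⁻¹) • (1 : Matrix (Fin N) (Fin N) ℂ)) *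
            (Xᴴ * X) + (z : Matrix (Fin N) (Fin N) ℂ) := by
            simp only [mul_smul_comm, smul_mul_assoc, mul_one, ← hA]
        _ = 1 := h2
    set W : Matrix (Fin N) (Fin N) ℂ := (-(lam : ℂ)⁻¹) • A + 1 with hW
    have hinv : Invertible W := invertibleOfLeftInverse _ _ hz'
    have hu : IsUnit W := isUnit_of_invertible W
    have hkey : algebraMap ℝ (Matrix (Fin N) (Fin N) ℂ) lam - A
        = ((lam : ℂ) • (1 : Matrix (Fin N) (Fin N) ℂ)) * W := by
      rw [smul_mul_assoc, one_mul, hW, smul_add, smul_smul,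
        mul_neg, mul_inv_cancel₀ hc, neg_one_smul,
        Algebra.algebraMap_eq_smul_one]
      rw [show ((lam : ℝ) • (1 : Matrix (Fin N) (Fin N) ℂ)) =
        ((lam : ℂ) • (1 : Matrix (Fin N) (Fin N) ℂ)) by
          rw [← algebraMap_smul ℂ (lam : ℝ)]; norm_num]
      abel
    rw [hkey]
    refine IsUnit.mul ?_ hu
    rw [← Algebra.algebraMap_eq_smul_one]
    exact (isUnit_iff_ne_zero.mpr hc).map (algebraMap ℂ (Matrix (Fin N) (Fin N) ℂ))
  -- hence A = 0
  have hA0 : A = 0 := by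
    rw [hherm.spectral_theorem]
    have hd : Matrix.diagonal (RCLike.ofReal ∘ hherm.eigenvalues) =
        (0 : Matrix (Fin N) (Fin N) ℂ) := by
      ext j k
      by_cases h : j = k <;> simp [Matrix.diagonal, h, hev]
    rw [hd, map_zero]
  have hX0 : X = 0 := by
    open scoped ComplexOrder in
    rw [← conjTranspose_mul_self_eq_zero (A := X), ← hA, hA0]
  exact Subtype.ext hX0
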